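/- Fix a finite graph G with vertex set {v_1,…,v_n} and a spanning subgraph H. The regions U_T = {(η_1,…,η_n) ∈ (−∞,0)^n : η_i < η_j whenever T_i ⊆ T_j}, as T ranges over admissible tubings of H, partition (−∞,0)^n up to a measure-zero set. Equivalently, any point of (−∞,0)^n with pairwise distinct coordinates lies in exactly one region U_T. -/

import Mathlib

open SimpleGraph

namespace Cosmo

variable {V : Type*}

/-- A tube of `G` is a connected subgraph. -/
def IsTube (G : SimpleGraph V) (T : G.Subgraph) : Prop := T.Connected

/-- Tubes are nested if one contains the other. -/
def Nested {G : SimpleGraph V} (S T : G.Subgraph) : Prop := S ≤ T ∨ T ≤ S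

/-- Tubes overlap if their (vertex) intersection is nonempty and they are not nested. -/
def Overlapping {G : SimpleGraph V} (S T : G.Subgraph) : Prop :=
  (S.verts ∩ T.verts).Nonempty ∧ ¬ Nested S T

/-- Tubes are incompatible if there is an edge of `G` between them and they are not nested. -/
def Incompatible {G : SimpleGraph V} (S T : G.Subgraph) : Prop :=
  (∃ u w, G.Adj u w ∧ u ∈ S.verts ∧ w ∈ T.verts) ∧ ¬ Nested S T

/-- Tubes are compatible if they are not incompatible. -/
def Compatible {G : SimpleGraph V} (S T : G.Subgraph) : Prop := ¬ Incompatible S T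

/-- A complete tubing: a maximal collection of pairwise non-overlapping tubes. -/
def IsCompleteTubing (G : SimpleGraph V) (𝒯 : Set G.Subgraph) : Prop :=
  Maximal (fun 𝒞 : Set G.Subgraph =>
    (∀ T ∈ 𝒞, IsTube G T) ∧ 𝒞.Pairwise fun S T => ¬ Overlapping S T) 𝒯

/-- An admissible tubing: a maximal collection of pairwise compatible induced tubes. -/
def IsAdmissibleTubing (G : SimpleGraph V) (𝒯 : Set G.Subgraph) : Prop :=
  Maximal (fun 𝒞 : Set G.Subgraph =>
    (∀ T ∈ 𝒞, IsTube G T ∧ T.IsInduced) ∧ 𝒞.Pairwise Compatible) 𝒯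

/-- A labeling of an admissible tubing by the vertices, as in the bijection lemma:
`g v` is the tube associated to `v`, i.e. `v ∈ g v` and `v` avoids all strictly
smaller tubes of the tubing. -/
def IsVertexLabeling (G : SimpleGraph V) (𝒯 : Set G.Subgraph) (g : V → G.Subgraph) : Prop :=
  Set.BijOn g Set.univ 𝒯 ∧ ∀ v, v ∈ (g v).verts ∧ ∀ S ∈ 𝒯, S < g v → v ∉ S.verts


lemma compatible_of_nested {G : SimpleGraph V} {S T : G.Subgraph} (h : Nested S T) :
    Compatible S T := fun hh => hh.2 h

lemma Nested.symm' {G : SimpleGraph V} {S T : G.Subgraph} (h : Nested S T) : Nested T S := h.symm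

lemma Compatible.symm' {G : SimpleGraph V} {S T : G.Subgraph} (h : Compatible S T) :
    Compatible T S := by
  rintro ⟨⟨u, w, hadj, hu, hw⟩, hn⟩
  exact h ⟨⟨w, u, hadj.symm, hw, hu⟩, fun hh => hn hh.symm'⟩

lemma le_of_verts_subset {G : SimpleGraph V} {S T : G.Subgraph} (hT : T.IsInduced)
    (h : S.verts ⊆ T.verts) : S ≤ T := by
  constructor
  · exact h
  · intro a b hadj
    exact hT (h (S.edge_vert hadj)) (h (S.edge_vert hadj.symm)) (S.adj_sub hadj)

lemma eq_of_verts_eq {G : SimpleGraph V} {S T : G.Subgraph} (hS : S.IsInduced)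
    (hT : T.IsInduced) (h : S.verts = T.verts) : S = T :=
  le_antisymm (le_of_verts_subset hT h.le) (le_of_verts_subset hS h.ge)

/-- closure of a predicate along reachability -/
lemma reach_closed {G' : SimpleGraph V} {P : V → Prop}
    (hstep : ∀ a b, G'.Adj a b → P a → P b) {u v : V}
    (h : G'.Reachable u v) (hu : P u) : P v := by
  obtain ⟨p⟩ := h
  induction p with
  | nil => exact hu
  | cons h p ih => exact ih (hstep _ _ h hu)

/-- the induced subgraph on the reachability set of `G' ≤ H` from `v` is connected -/
lemma reachSub_connected (H : SimpleGraph V) {G' : SimpleGraph V}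
    (hle : ∀ a b, G'.Adj a b → H.Adj a b) (v : V) :
    ((⊤ : H.Subgraph).induce {u | G'.Reachable v u}).Connected := by
  set R : Set V := {u | G'.Reachable v u} with hR
  have hv : v ∈ R := Reachable.refl v
  rw [Subgraph.connected_iff]
  constructor
  · constructor
    have key : ∀ (x : V) (hx : x ∈ R),
        ((⊤ : H.Subgraph).induce R).coe.Reachable ⟨v, hv⟩ ⟨x, hx⟩ := by
      intro x hx
      obtain ⟨p⟩ := id hx
      have : ∀ (a b : V) (p : G'.Walk a b) (ha : a ∈ R),
          ∃ hb : b ∈ R, ((⊤ : H.Subgraph).induce R).coe.Reachable ⟨a, ha⟩ ⟨b, hb⟩ := by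
        intro a b p
        induction p with
        | nil => exact fun ha => ⟨ha, Reachable.refl _⟩
        | @cons a c b h p ih =>
          intro ha
          have hc : c ∈ R := ha.trans h.reachable
          obtain ⟨hb, hr⟩ := ih hc
          refine ⟨hb, Reachable.trans (Adj.reachable ?_) hr⟩
          exact ⟨ha, hc, hle _ _ h⟩
      obtain ⟨hb, hr⟩ := this v x p hv
      exact hr
    rintro ⟨x, hx⟩ ⟨y, hy⟩
    exact (key x hx).symm.trans (key y hy)
  · exact ⟨v, hv⟩

lemma exists_boundary {G' : SimpleGraph V} (Tv : Set V) {v b0 : V} (hv : v ∈ Tv)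
    (hr : G'.Reachable v b0) (hb0 : b0 ∉ Tv) :
    ∃ a b, a ∈ Tv ∧ b ∉ Tv ∧ G'.Adj a b ∧ G'.Reachable v b := by
  obtain ⟨p⟩ := hr
  have : ∀ (a b : V) (p : G'.Walk a b), a ∈ Tv → G'.Reachable v a → b ∉ Tv →
      ∃ x y, x ∈ Tv ∧ y ∉ Tv ∧ G'.Adj x y ∧ G'.Reachable v y := by
    intro a b p
    induction p with
    | nil => exact fun ha _ hb => absurd ha hb
    | @cons a c b h p ih =>
      intro ha hva hb
      by_cases hc : c ∈ Tv
      · exact ih hc (hva.trans h.reachable) hb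
      · exact ⟨a, c, ha, hc, h, hva.trans h.reachable⟩
  exact this v b0 p hv (Reachable.refl v) hb0

/-- connected subgraphs map walks into supergraphs -/
lemma reachable_of_connected {H : SimpleGraph V} {T : H.Subgraph} (hc : T.Connected)
    {G' : SimpleGraph V} (hsub : ∀ a b, T.Adj a b → G'.Adj a b) {x y : V}
    (hx : x ∈ T.verts) (hy : y ∈ T.verts) : G'.Reachable x y := by
  have h := hc ⟨x, hx⟩ ⟨y, hy⟩
  obtain ⟨p⟩ := h
  have : ∀ (a b : T.verts) (p : T.coe.Walk a b), G'.Reachable a.1 b.1 := by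
    intro a b p
    induction p with
    | nil => exact Reachable.refl _
    | cons h p ih => exact (Adj.reachable (hsub _ _ h)).trans ih
  exact this _ _ p

lemma exists_adj_of_ne {H : SimpleGraph V} {T : H.Subgraph} (hc : T.Connected)
    {x y : V} (hx : x ∈ T.verts) (hy : y ∈ T.verts) (hne : x ≠ y) :
    ∃ z, T.Adj x z := by
  obtain ⟨p⟩ := hc ⟨x, hx⟩ ⟨y, hy⟩
  cases p with
  | nil => exact absurd rfl hne
  | cons h p => exact ⟨_, h⟩

section Main
variable (H : SimpleGraph V) (η : V → ℝ)

/-- The graph `H` restricted to vertices with `η ≤ c`. -/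
def Gr (c : ℝ) : SimpleGraph V where
  Adj a b := H.Adj a b ∧ η a ≤ c ∧ η b ≤ c
  symm := ⟨fun a b h => ⟨h.1.symm, h.2.2, h.2.1⟩⟩
  loopless := ⟨fun a h => H.loopless.irrefl a h.1⟩

/-- vertex set of the tube at `v` -/
@[simp] lemma Gr_adj {H : SimpleGraph V} {η : V → ℝ} {c : ℝ} {a b : V} :
    (Gr H η c).Adj a b ↔ H.Adj a b ∧ η a ≤ c ∧ η b ≤ c := Iff.rfl

def Wv (v : V) : Set V := {u | (Gr H η (η v)).Reachable v u}

/-- the tube at `v` -/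
def tube (v : V) : H.Subgraph := (⊤ : H.Subgraph).induce (Wv H η v)

variable {H η}

lemma mem_Wv_self (v : V) : v ∈ Wv H η v := Reachable.refl v

lemma le_of_mem_Wv {u v : V} (h : u ∈ Wv H η v) : η u ≤ η v :=
  reach_closed (fun _ _ hab _ => (Gr_adj.mp hab).2.2) h le_rfl

lemma Gr_mono {c d : ℝ} (h : c ≤ d) : Gr H η c ≤ Gr H η d :=
  fun _ _ ⟨hab, ha, hb⟩ => ⟨hab, ha.trans h, hb.trans h⟩

lemma Wv_subset_Wv {u v : V} (h : u ∈ Wv H η v) : Wv H η u ⊆ Wv H η v := by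
  intro x hx
  exact h.trans ((hx.mono (Gr_mono (le_of_mem_Wv h))))

lemma mem_Wv_of_adj {a b v : V} (hb : b ∈ Wv H η v) (hab : H.Adj b a) (ha : η a ≤ η v) :
    a ∈ Wv H η v :=
  hb.trans (Adj.reachable ⟨hab, le_of_mem_Wv hb, ha⟩)

@[simp] lemma tube_verts (v : V) : (tube H η v).verts = Wv H η v := rfl

lemma tube_isInduced (v : V) : (tube H η v).IsInduced := by
  intro a ha b hb hadj
  exact ⟨ha, hb, hadj⟩

lemma tube_connected (v : V) : (tube H η v).Connected :=
  reachSub_connected H (fun _ _ h => (Gr_adj.mp h).1) v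

lemma tube_le_tube {u v : V} (h : u ∈ Wv H η v) : tube H η u ≤ tube H η v :=
  le_of_verts_subset (tube_isInduced v) (Wv_subset_Wv h)

lemma mem_Wv_of_le {u v : V} (h : tube H η u ≤ tube H η v) : u ∈ Wv H η v :=
  h.1 (mem_Wv_self u)

/-- key compatibility step: an edge between tubes nests them -/
lemma tube_le_of_edge {u v a b : V} (huv : η u ≤ η v) (hadj : H.Adj a b)
    (ha : a ∈ Wv H η u) (hb : b ∈ Wv H η v) : tube H η u ≤ tube H η v := by
  have hav : a ∈ Wv H η v :=
    mem_Wv_of_adj hb hadj.symm ((le_of_mem_Wv ha).trans huv)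
  -- a reaches u within Gr (η u) ≤ Gr (η v)
  have : (Gr H η (η v)).Reachable a u := (ha.mono (Gr_mono huv)).symm
  exact tube_le_tube (hav.trans this)

lemma tube_nested_of_edge {u v a b : V} (hadj : H.Adj a b)
    (ha : a ∈ Wv H η u) (hb : b ∈ Wv H η v) : Nested (tube H η u) (tube H η v) := by
  rcases le_total (η u) (η v) with h | h
  · exact Or.inl (tube_le_of_edge h hadj ha hb)
  · exact Or.inr (tube_le_of_edge h hadj.symm hb ha)

variable (hinj : Function.Injective η)
include hinj

lemma tube_inj : Function.Injective (tube H η) := by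
  intro u v h
  have h1 : u ∈ Wv H η v := by rw [← tube_verts, ← h]; exact mem_Wv_self u
  have h2 : v ∈ Wv H η u := by rw [← tube_verts, h]; exact mem_Wv_self v
  exact hinj (le_antisymm (le_of_mem_Wv h1) (le_of_mem_Wv h2))

/-- any induced tube compatible with all the `tube v` is one of them -/
lemma eq_tube_of_compatible [Fintype V] {T : H.Subgraph} (ht : T.Connected)
    (hi : T.IsInduced) (hc : ∀ v : V, T ≠ tube H η v → Compatible T (tube H η v)) :
    ∃ m, T = tube H η m := by
  obtain ⟨m, hm, hmax⟩ := Set.exists_max_image T.verts η T.verts.toFinite ht.nonempty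
  refine ⟨m, ?_⟩
  by_contra hne
  -- T.verts ⊆ Wv m
  have hTsub : T.verts ⊆ Wv H η m := by
    intro u hu
    exact reachable_of_connected ht
      (fun a b hab => Gr_adj.mpr ⟨T.adj_sub hab, hmax _ (T.edge_vert hab), hmax _ (T.edge_vert hab.symm)⟩)
      hm hu
  -- strict, so there is a boundary edge
  have hne' : ¬ Wv H η m ⊆ T.verts := by
    intro hsub
    exact hne (eq_of_verts_eq hi (tube_isInduced m) (le_antisymm hTsub hsub))
  obtain ⟨b0, hb0W, hb0T⟩ := Set.not_subset.mp hne'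
  obtain ⟨a, b, haT, hbT, hab, hrb⟩ := exists_boundary T.verts hm hb0W hb0T
  have hbW : b ∈ Wv H η m := hrb
  -- T is incompatible with `tube b`
  have hTb : T ≠ tube H η b := by
    intro h
    exact hbT (h ▸ (mem_Wv_self b : b ∈ Wv H η b))
  refine hc b hTb ⟨⟨a, b, (Gr_adj.mp hab).1, haT, mem_Wv_self b⟩, ?_⟩
  rintro (h | h)
  · have : m ∈ Wv H η b := h.1 hm
    have : η m ≤ η b := le_of_mem_Wv this
    have hbm : b = m := hinj (le_antisymm (le_of_mem_Wv hbW) this)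
    exact hbT (hbm ▸ hm)
  · exact hbT (h.1 (mem_Wv_self b))


end Main

section Main2
variable {H : SimpleGraph V} {η : V → ℝ} (hinj : Function.Injective η)
include hinj

lemma tubing_admissible [Fintype V] : IsAdmissibleTubing H (Set.range (tube H η)) := by
  constructor
  · constructor
    · rintro T ⟨v, rfl⟩
      exact ⟨tube_connected v, tube_isInduced v⟩
    · rintro S ⟨u, rfl⟩ T ⟨v, rfl⟩ _
      rintro ⟨⟨a, b, hab, ha, hb⟩, hn⟩
      exact hn (tube_nested_of_edge hab ha hb)
  · rintro 𝒞 ⟨htubes, hpair⟩ hsub T hT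
    have ht := (htubes T hT).1
    have hi : T.IsInduced := (htubes T hT).2
    obtain ⟨m, rfl⟩ := eq_tube_of_compatible hinj ht hi (fun v hne =>
      hpair hT (hsub ⟨v, rfl⟩) hne)
    exact ⟨m, rfl⟩

omit hinj in
lemma labeling_eq_tube (g : V → H.Subgraph)
    (hg : IsVertexLabeling H (Set.range (tube H η)) g) (v : V) : g v = tube H η v := by
  obtain ⟨hbij, hlab⟩ := hg
  obtain ⟨w, hw⟩ : ∃ w, tube H η w = g v := Set.mem_range.mp (hbij.1 (Set.mem_univ v))
  replace hw := hw.symm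
  have hv : v ∈ Wv H η w := by rw [← tube_verts, ← hw]; exact (hlab v).1
  have hle : tube H η v ≤ g v := hw ▸ tube_le_tube hv
  rcases eq_or_lt_of_le hle with h | h
  · exact h.symm
  · exact absurd (mem_Wv_self v) ((hlab v).2 (tube H η v) ⟨v, rfl⟩ h)

lemma tube_lt_imp {u v : V} (h : tube H η u < tube H η v) : η u < η v := by
  have hm : u ∈ Wv H η v := h.le.1 (mem_Wv_self u)
  rcases lt_or_eq_of_le (le_of_mem_Wv hm) with hlt | heq
  · exact hlt
  · exact absurd (congrArg (tube H η) (hinj heq)) h.ne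

end Main2

section Main3
variable {H : SimpleGraph V}

lemma subgraph_finite [Finite V] : Finite H.Subgraph := by
  apply Finite.of_injective (fun S : H.Subgraph => (S.verts, S.Adj))
  intro S T h
  ext x y
  · exact Set.ext_iff.mp (congrArg Prod.fst h) x
  · exact iff_of_eq (congrFun (congrFun (congrArg Prod.snd h) x) y)

lemma top_induce_isInduced (s : Set V) : ((⊤ : H.Subgraph).induce s).IsInduced :=
  fun _ ha _ hb hadj => ⟨ha, hb, hadj⟩

/-- connected subgraphs sharing a vertex and compatible are nested -/
lemma nested_of_shared {S T : H.Subgraph} (hSc : S.Connected) (hc : Compatible S T)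
    {v : V} (hvS : v ∈ S.verts) (hvT : v ∈ T.verts) : Nested S T := by
  by_cases hs : ∃ u ∈ S.verts, u ≠ v
  · obtain ⟨u, hu, hne⟩ := hs
    obtain ⟨z, hz⟩ := exists_adj_of_ne hSc hvS hu (Ne.symm hne)
    by_contra hn
    exact hc ⟨⟨z, v, (S.adj_sub hz).symm, S.edge_vert hz.symm, hvT⟩, hn⟩
  · push_neg at hs
    refine Or.inl ⟨fun x hx => (hs x hx) ▸ hvT, fun {a b} hadj => ?_⟩
    exact absurd (((hs a (S.edge_vert hadj)).trans (hs b (S.edge_vert hadj.symm)).symm))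
      (H.ne_of_adj (S.adj_sub hadj))

variable [Fintype V] {𝒮 : Set H.Subgraph} (hS : IsAdmissibleTubing H 𝒮)
include hS

lemma mem_tubing_of_compatible {T : H.Subgraph} (ht : IsTube H T) (hi : T.IsInduced)
    (hc : ∀ S ∈ 𝒮, S ≠ T → Compatible T S) : T ∈ 𝒮 := by
  refine hS.2 ⟨?_, ?_⟩ (Set.subset_insert T 𝒮) (Set.mem_insert T 𝒮)
  · rintro S (rfl | hs)
    · exact ⟨ht, hi⟩
    · exact hS.1.1 S hs
  · haveI : Std.Symm (@Compatible V H) := ⟨fun _ _ h => h.symm'⟩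
    rw [Set.pairwise_insert_of_symm]
    exact ⟨hS.1.2, fun S hs hne => hc S hs (Ne.symm hne)⟩

/-- the connected component of `v` belongs to every admissible tubing -/
lemma comp_mem_tubing (v : V) :
    (⊤ : H.Subgraph).induce {u | H.Reachable v u} ∈ 𝒮 := by
  set C := (⊤ : H.Subgraph).induce {u | H.Reachable v u} with hC
  refine mem_tubing_of_compatible hS (reachSub_connected H (fun _ _ h => h) v)
    (top_induce_isInduced _) (fun S hs hne => ?_)
  rintro ⟨⟨x, y, hxy, hxC, hyS⟩, hn⟩
  -- y is reachable from v, so S meets C; whole S is inside C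
  have hyC : y ∈ C.verts := Reachable.trans hxC hxy.reachable
  apply hn
  right
  refine le_of_verts_subset (top_induce_isInduced _) (fun s hsv => ?_)
  have := reachable_of_connected (hS.1.1 S hs).1 (G' := H) (fun a b h => S.adj_sub h) hyS hsv
  exact Reachable.trans (hyC : H.Reachable v y) this

/-- every vertex has a minimal tube of the tubing containing it -/
lemma exists_min_tube (v : V) :
    ∃ M ∈ 𝒮, v ∈ M.verts ∧ ∀ S ∈ 𝒮, v ∈ S.verts → M ≤ S := by
  haveI : Finite H.Subgraph := subgraph_finite
  set s := {S ∈ 𝒮 | v ∈ S.verts} with hs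
  have hne : s.Nonempty := ⟨_, comp_mem_tubing hS v, Reachable.refl v⟩
  obtain ⟨M, hM, hmin⟩ := Set.Finite.exists_minimalFor id s (Set.toFinite s) hne
  refine ⟨M, hM.1, hM.2, fun S hsm hv => ?_⟩
  rcases eq_or_ne M S with rfl | hne'
  · exact le_rfl
  have hn : Nested M S :=
    nested_of_shared (hS.1.1 M hM.1).1 (hS.1.2 hM.1 hsm hne') hM.2 hv
  rcases hn with h | h
  · exact h
  · exact hmin ⟨hsm, hv⟩ h

/-- every tube of the tubing has a vertex avoiding all strictly smaller tubes -/
lemma exists_escape {T : H.Subgraph} (hT : T ∈ 𝒮) :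
    ∃ v ∈ T.verts, ∀ S ∈ 𝒮, S < T → v ∉ S.verts := by
  haveI : Finite H.Subgraph := subgraph_finite
  by_contra hcon
  push_neg at hcon
  -- every vertex of T has a maximal proper subtube containing it
  have hMx : ∀ u ∈ T.verts, ∃ S, (S ∈ 𝒮 ∧ S < T ∧ u ∈ S.verts) ∧
      ∀ S' ∈ 𝒮, S' < T → u ∈ S'.verts → S' ≤ S := by
    intro u hu
    obtain ⟨S0, hS0, hlt0, hu0⟩ := hcon u hu
    set s := {S | S ∈ 𝒮 ∧ S < T ∧ u ∈ S.verts} with hs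
    have hne : s.Nonempty := ⟨S0, hS0, hlt0, hu0⟩
    obtain ⟨M, hM, hmax⟩ := Set.Finite.exists_maximalFor id s (Set.toFinite s) hne
    refine ⟨M, hM, fun S' hs' hlt' hu' => ?_⟩
    rcases eq_or_ne M S' with rfl | hne'
    · exact le_rfl
    have hn : Nested M S' :=
      nested_of_shared (hS.1.1 M hM.1).1 (hS.1.2 hM.1 hs' hne') hM.2.2 hu'
    rcases hn with h | h
    · exact hmax ⟨hs', hlt', hu'⟩ h
    · exact h
  choose Mx hMx1 hMx2 using hMx
  -- Mx is constant along edges of T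
  have hedge : ∀ (a b : V) (ha : a ∈ T.verts) (hb : b ∈ T.verts), T.Adj a b →
      Mx a ha = Mx b hb := by
    intro a b ha hb hadj
    have h1 := hMx1 a ha
    have h2 := hMx1 b hb
    rcases eq_or_ne (Mx a ha) (Mx b hb) with h | hne'
    · exact h
    have hcomp := hS.1.2 h1.1 h2.1 hne'
    have hn : Nested (Mx a ha) (Mx b hb) := by
      by_contra hn
      exact hcomp ⟨⟨a, b, T.adj_sub hadj, h1.2.2, h2.2.2⟩, hn⟩
    rcases hn with h | h
    · -- Mx b contains a, is < T, so ≤ Mx a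
      have := hMx2 a ha (Mx b hb) h2.1 h2.2.1 (h.1 h1.2.2)
      exact le_antisymm h this
    · have := hMx2 b hb (Mx a ha) h1.1 h1.2.1 (h.1 h2.2.2)
      exact (le_antisymm h this).symm
  -- hence constant on the connected T
  have hTc : T.Connected := (hS.1.1 T hT).1
  obtain ⟨v0, hv0⟩ := hTc.nonempty
  have hconst : ∀ (u : V) (hu : u ∈ T.verts), Mx u hu = Mx v0 hv0 := by
    intro u hu
    obtain ⟨p⟩ := hTc ⟨u, hu⟩ ⟨v0, hv0⟩
    have : ∀ (x y : T.verts) (p : T.coe.Walk x y), Mx x.1 x.2 = Mx y.1 y.2 := by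
      intro x y p
      induction p with
      | nil => rfl
      | @cons x z y h p ih => exact (hedge x.1 z.1 x.2 z.2 h).trans ih
    exact this ⟨u, hu⟩ ⟨v0, hv0⟩ p
  -- so T.verts ⊆ Mx v0, contradicting Mx v0 < T
  have hsub : T.verts ⊆ (Mx v0 hv0).verts := by
    intro u hu
    exact hconst u hu ▸ (hMx1 u hu).2.2
  have hle : T ≤ Mx v0 hv0 :=
    le_of_verts_subset (hS.1.1 (Mx v0 hv0) (hMx1 v0 hv0).1).2 hsub
  exact absurd hle (not_le_of_gt (hMx1 v0 hv0).2.1)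


lemma minTube_unique_vertex {T : H.Subgraph} (hT : T ∈ 𝒮) {u v : V}
    (hu : u ∈ T.verts) (hv : v ∈ T.verts) (hne : u ≠ v)
    (hminu : ∀ S ∈ 𝒮, u ∈ S.verts → T ≤ S)
    (hminv : ∀ S ∈ 𝒮, v ∈ S.verts → T ≤ S) : False := by
  have hescv : ∀ S ∈ 𝒮, S < T → v ∉ S.verts :=
    fun S hs hlt hvS => absurd (hminv S hs hvS) (not_le_of_gt hlt)
  -- the graph T minus v
  set Gm : SimpleGraph V :=
    { Adj := fun a b => H.Adj a b ∧ (a ∈ T.verts ∧ a ≠ v) ∧ (b ∈ T.verts ∧ b ≠ v)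
      symm := ⟨fun a b h => ⟨h.1.symm, h.2.2, h.2.1⟩⟩
      loopless := ⟨fun a h => H.loopless.irrefl a h.1⟩ } with hGm
  have hGm_adj : ∀ a b, Gm.Adj a b ↔
      (H.Adj a b ∧ (a ∈ T.verts ∧ a ≠ v) ∧ (b ∈ T.verts ∧ b ≠ v)) := fun _ _ => Iff.rfl
  set C := (⊤ : H.Subgraph).induce {x | Gm.Reachable u x} with hC
  have hCind : C.IsInduced := top_induce_isInduced _
  have hCc : C.Connected := reachSub_connected H (fun a b h => ((hGm_adj a b).mp h).1) u
  have hCvert : ∀ x ∈ C.verts, x ∈ T.verts ∧ x ≠ v := by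
    intro x hx
    exact reach_closed (fun a b hadj _ => ((hGm_adj a b).mp hadj).2.2) hx ⟨hu, hne⟩
  have hTind : T.IsInduced := (hS.1.1 T hT).2
  have hCleT : C ≤ T := le_of_verts_subset hTind (fun x hx => (hCvert x hx).1)
  have huC : u ∈ C.verts := Reachable.refl u
  have hCneT : C ≠ T := by
    intro h
    exact (hCvert v (h ▸ hv)).2 rfl
  have hcompat : ∀ S ∈ 𝒮, S ≠ C → Compatible C S := by
    intro S hs hne'
    rintro ⟨⟨x, y, hxy, hxC, hyS⟩, hn⟩
    by_cases hTleS : T ≤ S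
    · exact hn (Or.inl (hCleT.trans hTleS))
    by_cases hSleT : S ≤ T
    · have hSltT : S < T := lt_of_le_of_ne hSleT (fun h => hTleS (h ▸ le_rfl))
      have hvS : v ∉ S.verts := hescv S hs hSltT
      have hyC : y ∈ C.verts := by
        have hx' := hCvert x hxC
        have hyT : y ∈ T.verts := hSleT.1 hyS
        have hyv : y ≠ v := fun h => hvS (h ▸ hyS)
        exact Reachable.trans hxC (Adj.reachable ((hGm_adj x y).mpr ⟨hxy, hx', hyT, hyv⟩))
      refine hn (Or.inr (le_of_verts_subset hCind ?_))
      intro s hsv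
      have hstep : Gm.Reachable y s := by
        refine reachable_of_connected (hS.1.1 S hs).1 (fun a b h => ?_) hyS hsv
        refine (hGm_adj a b).mpr ⟨S.adj_sub h, ⟨hSleT.1 (S.edge_vert h),
          fun hh => hvS (hh ▸ S.edge_vert h)⟩, ⟨hSleT.1 (S.edge_vert h.symm),
          fun hh => hvS (hh ▸ S.edge_vert h.symm)⟩⟩
      exact (hyC : Gm.Reachable u y).trans hstep
    · have hneST : T ≠ S := by rintro rfl; exact hTleS le_rfl
      have hcomp := hS.1.2 hT hs hneST
      refine hcomp ⟨⟨x, y, hxy, hCleT.1 hxC, hyS⟩, ?_⟩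
      rintro (h | h)
      · exact hTleS h
      · exact hSleT h
  have hCmem : C ∈ 𝒮 := mem_tubing_of_compatible hS hCc hCind hcompat
  exact hCneT (le_antisymm hCleT (hminu C hCmem huC))

/-- every admissible tubing has a vertex labeling by minimal tubes -/
lemma exists_minlabel :
    ∃ f : V → H.Subgraph, IsVertexLabeling H 𝒮 f ∧
      ∀ v, ∀ S ∈ 𝒮, v ∈ S.verts → f v ≤ S := by
  choose f hf1 hf2 hf3 using exists_min_tube hS
  have hlab : ∀ v, v ∈ (f v).verts ∧ ∀ S ∈ 𝒮, S < f v → v ∉ S.verts := by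
    intro v
    refine ⟨hf2 v, fun S hs hlt hvS => ?_⟩
    exact absurd (hf3 v S hs hvS) (not_le_of_gt hlt)
  refine ⟨f, ⟨⟨fun v _ => hf1 v, ?_, ?_⟩, hlab⟩, hf3⟩
  · -- injective
    intro x _ y _ hxy
    by_contra hne
    exact minTube_unique_vertex hS (hf1 x) (hf2 x) (hxy ▸ hf2 y) hne
      (hf3 x) (fun S hs h => hxy ▸ hf3 y S hs h)
  · -- surjective
    intro T hT
    obtain ⟨v, hv, hesc⟩ := exists_escape hS hT
    refine ⟨v, Set.mem_univ v, ?_⟩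
    have hle : f v ≤ T := hf3 v T hT hv
    rcases eq_or_lt_of_le hle with h | h
    · exact h
    · exact absurd (hf2 v) (hesc (f v) (hf1 v) h)


/-- uniqueness: an admissible tubing whose labelings respect the η-order is `range tube` -/
lemma tubing_eq_range_tube {η : V → ℝ} (hinj : Function.Injective η)
    (hP : ∀ g : V → H.Subgraph, IsVertexLabeling H 𝒮 g →
      ∀ u v : V, g u < g v → η u < η v) :
    𝒮 = Set.range (tube H η) := by
  obtain ⟨f, hflab, hfmin⟩ := exists_minlabel hS
  have hford := hP f hflab
  have hfS : ∀ v, f v ∈ 𝒮 := fun v => hflab.1.1 (Set.mem_univ v)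
  have hfv : ∀ v, v ∈ (f v).verts := fun v => (hflab.2 v).1
  have hfinj : Function.Injective f := fun a b h =>
    hflab.1.2.1 (Set.mem_univ a) (Set.mem_univ b) h
  have hall : ∀ v, f v = tube H η v := by
    by_contra hB
    push_neg at hB
    obtain ⟨v0, hv0⟩ := hB
    set B := {v | f v ≠ tube H η v} with hBdef
    obtain ⟨v, hvB, hvmin⟩ := Set.exists_min_image B η (Set.toFinite B) ⟨v0, hv0⟩
    have hsub : (f v).verts ⊆ Wv H η v := by
      have hbound : ∀ u ∈ (f v).verts, η u ≤ η v := by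
        intro u hu
        rcases eq_or_ne u v with rfl | hne
        · exact le_rfl
        have hle : f u ≤ f v := hfmin u (f v) (hfS v) hu
        have hlt : f u < f v := lt_of_le_of_ne hle (fun h => hne (hfinj h))
        exact (hford u v hlt).le
      intro u hu
      exact reachable_of_connected (hS.1.1 (f v) (hfS v)).1
        (fun a b h => Gr_adj.mpr ⟨(f v).adj_sub h, hbound _ ((f v).edge_vert h),
          hbound _ ((f v).edge_vert h.symm)⟩) (hfv v) hu
    have hsup : Wv H η v ⊆ (f v).verts := by
      by_contra hnot
      obtain ⟨b0, hb0W, hb0⟩ := Set.not_subset.mp hnot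
      obtain ⟨a, b, haT, hbT, hab, hrb⟩ := exists_boundary (f v).verts (hfv v) hb0W hb0
      have hbW : b ∈ Wv H η v := hrb
      have hbv : b ≠ v := fun h => hbT (h ▸ hfv v)
      have hblt : η b < η v := lt_of_le_of_ne (le_of_mem_Wv hbW) (fun h => hbv (hinj h))
      have hbnB : b ∉ B := fun h => absurd (hvmin b h) (not_le_of_gt hblt)
      have hfb : f b = tube H η b := not_not.mp hbnB
      have hbfb : b ∈ (f b).verts := hfv b
      have hne : f v ≠ f b := fun h => hbT (h.symm ▸ hbfb)
      have hcomp := hS.1.2 (hfS v) (hfS b) hne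
      have hn : Nested (f v) (f b) := by
        by_contra hn
        exact hcomp ⟨⟨a, b, (Gr_adj.mp hab).1, haT, hbfb⟩, hn⟩
      rcases hn with h | h
      · have hvW : v ∈ Wv H η b := by
          have := h.1 (hfv v)
          rwa [hfb, tube_verts] at this
        exact absurd (le_of_mem_Wv hvW) (not_le_of_gt hblt)
      · exact hbT (h.1 hbfb)
    exact hvB (eq_of_verts_eq (hS.1.1 (f v) (hfS v)).2 (tube_isInduced v)
      (le_antisymm hsub hsup))
  ext T
  constructor
  · intro hT
    obtain ⟨v, -, rfl⟩ := hflab.1.2.2 hT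
    exact ⟨v, (hall v).symm⟩
  · rintro ⟨v, rfl⟩
    exact (hall v) ▸ hfS v

end Main3


/-- any point of the negative orthant with pairwise distinct coordinates lies
in the region `U_𝒯` for exactly one admissible tubing `𝒯` of `H` (the regions `U_𝒯`
partition the orthant up to measure zero). -/
theorem regions_partition {V : Type*} [Fintype V] (H : SimpleGraph V)
    (η : V → ℝ) (hneg : ∀ v, η v < 0) (hinj : Function.Injective η) :
    ∃! 𝒯 : Set H.Subgraph, IsAdmissibleTubing H 𝒯 ∧
      ∀ g : V → H.Subgraph, IsVertexLabeling H 𝒯 g →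
        ∀ u v : V, g u < g v → η u < η v := by
  refine ⟨Set.range (tube H η), ⟨tubing_admissible hinj, ?_⟩, ?_⟩
  · intro g hg u v hlt
    rw [labeling_eq_tube g hg u, labeling_eq_tube g hg v] at hlt
    exact tube_lt_imp hinj hlt
  · rintro 𝒮 ⟨hS, hP⟩
    exact tubing_eq_range_tube hS hinj hP


end Cosmo
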